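/- For σ > 0, the function ω ↦ (1 − e^{−2ω²σ²})/(2ω²e^{−ω²σ²}) on (0,∞) is strictly increasing, and its infimum as ω → 0⁺ equals σ². -/

import Mathlib

open Filter Set

private lemma sinh_lt_mul_cosh {x : ℝ} (hx : 0 < x) : Real.sinh x < x * Real.cosh x := by
  have hmono : StrictMonoOn (fun t : ℝ => t * Real.cosh t - Real.sinh t) (Set.Ici 0) := by
    apply strictMonoOn_of_deriv_pos (convex_Ici 0)
    · exact ((continuous_id.mul Real.continuous_cosh).sub Real.continuous_sinh).continuousOn
    · intro t ht
      rw [interior_Ici] at ht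
      have h1 : HasDerivAt (fun t : ℝ => t * Real.cosh t - Real.sinh t)
          ((1 * Real.cosh t + t * Real.sinh t) - Real.cosh t) t :=
        ((hasDerivAt_id t).mul (Real.hasDerivAt_cosh t)).sub (Real.hasDerivAt_sinh t)
      rw [h1.deriv]
      have : (1 * Real.cosh t + t * Real.sinh t) - Real.cosh t = t * Real.sinh t := by ring
      rw [this]
      exact mul_pos ht (Real.sinh_pos_iff.mpr ht)
  have := hmono (Set.self_mem_Ici) (Set.mem_Ici.mpr hx.le) hx
  simpa using this

private lemma g_mono : StrictMonoOn (fun u : ℝ => Real.sinh u / u) (Set.Ioi 0) := by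
  apply strictMonoOn_of_deriv_pos (convex_Ioi 0)
  · exact Real.continuous_sinh.continuousOn.div continuousOn_id
      (fun u hu => (Set.mem_Ioi.mp hu).ne')
  · intro u hu
    rw [interior_Ioi] at hu
    have h1 : HasDerivAt (fun u : ℝ => Real.sinh u / u)
        ((Real.cosh u * u - Real.sinh u * 1) / u ^ 2) u :=
      (Real.hasDerivAt_sinh u).div (hasDerivAt_id u) hu.ne'
    rw [h1.deriv]
    apply div_pos
    · have := sinh_lt_mul_cosh hu
      nlinarith
    · exact pow_pos hu 2

private lemma g_tendsto : Tendsto (fun u : ℝ => Real.sinh u / u)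
    (nhdsWithin 0 (Set.Ioi 0)) (nhds 1) := by
  have h := hasDerivAt_iff_tendsto_slope.mp (Real.hasDerivAt_sinh 0)
  rw [Real.cosh_zero] at h
  have h2 : Tendsto (slope Real.sinh 0) (nhdsWithin 0 (Set.Ioi 0)) (nhds 1) :=
    h.mono_left (nhdsWithin_mono 0 (fun x hx => (Set.mem_Ioi.mp hx).ne'))
  refine h2.congr (fun u => ?_)
  simp [slope_def_field, div_eq_div_iff]

private lemma asv_eq (σ : ℝ) (hσ : 0 < σ) {ω : ℝ} (hω : ω ≠ 0) :
    (1 - Real.exp (-2 * ω^2 * σ^2)) / (2 * ω^2 * Real.exp (-ω^2 * σ^2))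
      = σ^2 * (Real.sinh (ω^2 * σ^2) / (ω^2 * σ^2)) := by
  rw [Real.sinh_eq]
  have he : Real.exp (-2 * ω ^ 2 * σ ^ 2)
      = Real.exp (-(ω ^ 2 * σ ^ 2)) * Real.exp (-(ω ^ 2 * σ ^ 2)) := by
    rw [← Real.exp_add]; ring_nf
  have hne := Real.exp_ne_zero (-(ω ^ 2 * σ ^ 2))
  have h1 : Real.exp (ω ^ 2 * σ ^ 2) * Real.exp (-(ω ^ 2 * σ ^ 2)) = 1 := by
    rw [← Real.exp_add]; simp
  rw [he]
  field_simp
  linear_combination (-1) * h1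

theorem gaussian_location_asv_monotone (σ : ℝ) (hσ : 0 < σ) :
    StrictMonoOn (fun ω : ℝ =>
        (1 - Real.exp (-2 * ω^2 * σ^2)) / (2 * ω^2 * Real.exp (-ω^2 * σ^2)))
      (Set.Ioi 0) ∧
    Tendsto (fun ω : ℝ =>
        (1 - Real.exp (-2 * ω^2 * σ^2)) / (2 * ω^2 * Real.exp (-ω^2 * σ^2)))
      (nhdsWithin 0 (Set.Ioi 0)) (nhds (σ^2)) := by
  have hσ2 : (0:ℝ) < σ^2 := by positivity
  constructor
  · intro a ha b hb hab
    have ha0 : (0:ℝ) < a := ha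
    have hb0 : (0:ℝ) < b := hb
    simp only
    rw [asv_eq σ hσ ha0.ne', asv_eq σ hσ hb0.ne']
    have hua : a ^ 2 * σ ^ 2 ∈ Set.Ioi (0:ℝ) := by simp; positivity
    have hub : b ^ 2 * σ ^ 2 ∈ Set.Ioi (0:ℝ) := by simp; positivity
    have hsq : a ^ 2 < b ^ 2 := by nlinarith
    have hlt : a ^ 2 * σ ^ 2 < b ^ 2 * σ ^ 2 := mul_lt_mul_of_pos_right hsq hσ2
    exact mul_lt_mul_of_pos_left (g_mono hua hub hlt) hσ2
  · have hu : Tendsto (fun ω : ℝ => ω ^ 2 * σ ^ 2) (nhdsWithin 0 (Set.Ioi 0))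
        (nhdsWithin 0 (Set.Ioi 0)) := by
      apply tendsto_nhdsWithin_of_tendsto_nhds_of_eventually_within
      · have : Tendsto (fun ω : ℝ => ω ^ 2 * σ ^ 2) (nhds 0) (nhds (0 ^ 2 * σ ^ 2)) := by
          exact ((continuous_pow 2).mul continuous_const).tendsto 0
        simpa using this.mono_left nhdsWithin_le_nhds
      · filter_upwards [self_mem_nhdsWithin] with ω hω
        have : (0:ℝ) < ω := hω
        simp; positivity
    have h := (g_tendsto.comp hu).const_mul (σ^2)
    rw [mul_one] at h
    refine h.congr' ?_
    filter_upwards [self_mem_nhdsWithin] with ω hω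
    exact (asv_eq σ hσ (ne_of_gt hω)).symm
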